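/- arXiv:2512.10387 — 6 statements merged into one kernel-verified Lean document; each statement's English description precedes it below -/
import Mathlib

section
/- Let r_u, r_v, r_w > 0 and let Θ_uv, Θ_vw, Θ_uw ∈ [0, π/2]. Define l_uv = sqrt(r_u² + r_v² + 2 r_u r_v cos Θ_uv) and similarly for the other two pairs. Then the three lengths l_uv, l_vw, l_uw satisfy the strict triangle inequalities, so there exists a Euclidean triangle with these side lengths. -/
/-- Edge length of a pair of overlapping circles with radii `ru, rv` and overlap angle `Θ`. -/
noncomputable def elen (ru rv Θ : ℝ) : ℝ :=
  Real.sqrt (ru ^ 2 + rv ^ 2 + 2 * ru * rv * Real.cos Θ)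

lemma elen_lt (a b Θ : ℝ) (ha : 0 < a) (hb : 0 < b) (hΘ : Θ ∈ Set.Icc 0 (Real.pi / 2)) :
    a < elen a b Θ := by
  have hc : 0 ≤ Real.cos Θ := Real.cos_nonneg_of_mem_Icc
    ⟨by linarith [hΘ.1, Real.pi_pos], hΘ.2⟩
  have h : a ^ 2 < a ^ 2 + b ^ 2 + 2 * a * b * Real.cos Θ := by nlinarith [mul_nonneg (mul_nonneg (by linarith : (0:ℝ) ≤ 2*a) hb.le) hc, sq_nonneg b]
  calc a = Real.sqrt (a ^ 2) := (Real.sqrt_sq ha.le).symm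
    _ < _ := Real.sqrt_lt_sqrt (by positivity) h

lemma elen_le (a b Θ : ℝ) (ha : 0 < a) (hb : 0 < b) :
    elen a b Θ ≤ a + b := by
  have hc : Real.cos Θ ≤ 1 := Real.cos_le_one Θ
  have h : a ^ 2 + b ^ 2 + 2 * a * b * Real.cos Θ ≤ (a + b) ^ 2 := by nlinarith [mul_pos ha hb]
  calc elen a b Θ ≤ Real.sqrt ((a + b) ^ 2) := Real.sqrt_le_sqrt h
    _ = a + b := Real.sqrt_sq (by positivity)

theorem stmt_2 (ru rv rw Θuv Θvw Θuw : ℝ)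
    (hru : 0 < ru) (hrv : 0 < rv) (hrw : 0 < rw)
    (huv : Θuv ∈ Set.Icc 0 (Real.pi / 2)) (hvw : Θvw ∈ Set.Icc 0 (Real.pi / 2))
    (huw : Θuw ∈ Set.Icc 0 (Real.pi / 2)) :
    elen ru rv Θuv < elen rv rw Θvw + elen ru rw Θuw ∧
    elen rv rw Θvw < elen ru rv Θuv + elen ru rw Θuw ∧
    elen ru rw Θuw < elen ru rv Θuv + elen rv rw Θvw := by
  have h1 := elen_le ru rv Θuv hru hrv
  have h2 := elen_le rv rw Θvw hrv hrw
  have h3 := elen_le ru rw Θuw hru hrw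
  have g1 := elen_lt rv rw Θvw hrv hrw hvw
  have g2 := elen_lt ru rw Θuw hru hrw huw
  have g3 := elen_lt ru rv Θuv hru hrv huv
  have g4 := elen_lt rw ru Θuw hrw hru huw
  have g5 := elen_lt rw rv Θvw hrw hrv hvw
  have g6 := elen_lt rv ru Θuv hrv hru huv
  · have e1 : elen rw ru Θuw = elen ru rw Θuw := by unfold elen; ring_nf
    have e2 : elen rw rv Θvw = elen rv rw Θvw := by unfold elen; ring_nf
    have e3 : elen rv ru Θuv = elen ru rv Θuv := by unfold elen; ring_nf
    rw [e1] at g4; rw [e2] at g5; rw [e3] at g6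
    exact ⟨by linarith, by linarith, by linarith⟩
end

section
/- Let r_u, r_v, r_w > 0 and Θ_uv, Θ_vw, Θ_uw ∈ [0, π) such that I_u^{vw} ≥ 0, I_v^{uw} ≥ 0 and I_w^{uv} ≥ 0, where I_u^{vw} = cos Θ_vw + cos Θ_uv cos Θ_uw (and similarly for the others). Then the lengths l_uv, l_vw, l_uw defined by l_uv = sqrt(r_u² + r_v² + 2 r_u r_v cos Θ_uv) (and similarly) satisfy the triangle inequalities. -/
private lemma key (ru rv rw a b c : ℝ)
    (hru : 0 < ru) (hrv : 0 < rv) (hrw : 0 < rw)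
    (ha1 : -1 ≤ a) (ha2 : a ≤ 1) (hb1 : -1 ≤ b) (hb2 : b ≤ 1)
    (hc1 : -1 ≤ c) (hc2 : c ≤ 1)
    (h1 : 0 ≤ b + a * c) (h2 : 0 ≤ c + a * b) (h3 : 0 ≤ a + b * c) :
    Real.sqrt (ru ^ 2 + rv ^ 2 + 2 * ru * rv * a) ≤
      Real.sqrt (rv ^ 2 + rw ^ 2 + 2 * rv * rw * b) +
      Real.sqrt (ru ^ 2 + rw ^ 2 + 2 * ru * rw * c) := by
  set X : ℝ := rv ^ 2 + rw ^ 2 + 2 * rv * rw * b with hXdef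
  set Y : ℝ := ru ^ 2 + rw ^ 2 + 2 * ru * rw * c with hYdef
  have hX0 : 0 ≤ X := by nlinarith [sq_nonneg (rv - rw), mul_pos hrv hrw]
  have hY0 : 0 ≤ Y := by nlinarith [sq_nonneg (ru - rw), mul_pos hru hrw]
  have hsX : Real.sqrt X ^ 2 = X := Real.sq_sqrt hX0
  have hsY : Real.sqrt Y ^ 2 = Y := Real.sq_sqrt hY0
  have hB : 0 ≤ Real.sqrt X + Real.sqrt Y := by positivity
  rw [show Real.sqrt X + Real.sqrt Y = Real.sqrt ((Real.sqrt X + Real.sqrt Y) ^ 2) by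
    rw [Real.sqrt_sq hB]]
  apply Real.sqrt_le_sqrt
  have hXY : Real.sqrt X * Real.sqrt Y = Real.sqrt (X * Y) := (Real.sqrt_mul hX0 Y).symm
  have hD : ru * rv * a - rw ^ 2 - rv * rw * b - ru * rw * c ≤ Real.sqrt (X * Y) := by
    rcases le_or_gt (ru * rv * a - rw ^ 2 - rv * rw * b - ru * rw * c) 0 with h | h
    · exact h.trans (Real.sqrt_nonneg _)
    · apply (Real.le_sqrt h.le (mul_nonneg hX0 hY0)).mpr
      have k1 : 0 ≤ (ru * rv) ^ 2 * ((1 - a) * (1 + a)) := by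
        apply mul_nonneg (sq_nonneg _); nlinarith
      have k2 : 0 ≤ (rv * rw) ^ 2 * ((1 - b) * (1 + b)) := by
        apply mul_nonneg (sq_nonneg _); nlinarith
      have k3 : 0 ≤ (ru * rw) ^ 2 * ((1 - c) * (1 + c)) := by
        apply mul_nonneg (sq_nonneg _); nlinarith
      have k4 : 0 ≤ 2 * ru * rv ^ 2 * rw * (c + a * b) := by positivity
      have k5 : 0 ≤ 2 * ru ^ 2 * rv * rw * (b + a * c) := by positivity
      have k6 : 0 ≤ 2 * ru * rv * rw ^ 2 * (a + b * c) := by positivity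
      have hid : X * Y - (ru * rv * a - rw ^ 2 - rv * rw * b - ru * rw * c) ^ 2 =
          (ru * rv) ^ 2 * ((1 - a) * (1 + a)) + (rv * rw) ^ 2 * ((1 - b) * (1 + b)) +
          (ru * rw) ^ 2 * ((1 - c) * (1 + c)) + 2 * ru * rv ^ 2 * rw * (c + a * b) +
          2 * ru ^ 2 * rv * rw * (b + a * c) + 2 * ru * rv * rw ^ 2 * (a + b * c) := by
        rw [hXdef, hYdef]; ring
      linarith [k1, k2, k3, k4, k5, k6, hid]
  nlinarith [hD, hsX, hsY, hXY, Real.sqrt_nonneg X, Real.sqrt_nonneg Y]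

theorem stmt_3 (ru rv rw Θuv Θvw Θuw : ℝ)
    (hru : 0 < ru) (hrv : 0 < rv) (hrw : 0 < rw)
    (huv : Θuv ∈ Set.Ico 0 Real.pi) (hvw : Θvw ∈ Set.Ico 0 Real.pi)
    (huw : Θuw ∈ Set.Ico 0 Real.pi)
    (hIu : 0 ≤ Real.cos Θvw + Real.cos Θuv * Real.cos Θuw)
    (hIv : 0 ≤ Real.cos Θuw + Real.cos Θuv * Real.cos Θvw)
    (hIw : 0 ≤ Real.cos Θuv + Real.cos Θuw * Real.cos Θvw) :
    elen ru rv Θuv ≤ elen rv rw Θvw + elen ru rw Θuw ∧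
    elen rv rw Θvw ≤ elen ru rv Θuv + elen ru rw Θuw ∧
    elen ru rw Θuw ≤ elen ru rv Θuv + elen rv rw Θvw := by
  have n1 := Real.neg_one_le_cos Θuv
  have n2 := Real.neg_one_le_cos Θvw
  have n3 := Real.neg_one_le_cos Θuw
  have o1 := Real.cos_le_one Θuv
  have o2 := Real.cos_le_one Θvw
  have o3 := Real.cos_le_one Θuw
  refine ⟨?_, ?_, ?_⟩
  · exact key ru rv rw _ _ _ hru hrv hrw n1 o1 n2 o2 n3 o3 (by nlinarith) (by nlinarith) (by nlinarith)
  · have h := key rv rw ru (Real.cos Θvw) (Real.cos Θuw) (Real.cos Θuv)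
      hrv hrw hru n2 o2 n3 o3 n1 o1 (by nlinarith) (by nlinarith) (by nlinarith)
    simp only [elen]
    calc Real.sqrt (rv ^ 2 + rw ^ 2 + 2 * rv * rw * Real.cos Θvw)
        ≤ Real.sqrt (rw ^ 2 + ru ^ 2 + 2 * rw * ru * Real.cos Θuw) +
          Real.sqrt (rv ^ 2 + ru ^ 2 + 2 * rv * ru * Real.cos Θuv) := h
      _ = Real.sqrt (ru ^ 2 + rv ^ 2 + 2 * ru * rv * Real.cos Θuv) +
          Real.sqrt (ru ^ 2 + rw ^ 2 + 2 * ru * rw * Real.cos Θuw) := by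
          rw [show rw ^ 2 + ru ^ 2 + 2 * rw * ru * Real.cos Θuw
              = ru ^ 2 + rw ^ 2 + 2 * ru * rw * Real.cos Θuw by ring,
            show rv ^ 2 + ru ^ 2 + 2 * rv * ru * Real.cos Θuv
              = ru ^ 2 + rv ^ 2 + 2 * ru * rv * Real.cos Θuv by ring]
          ring
  · have h := key ru rw rv (Real.cos Θuw) (Real.cos Θvw) (Real.cos Θuv)
      hru hrw hrv n3 o3 n2 o2 n1 o1 (by nlinarith) (by nlinarith) (by nlinarith)
    simp only [elen]
    calc Real.sqrt (ru ^ 2 + rw ^ 2 + 2 * ru * rw * Real.cos Θuw)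
        ≤ Real.sqrt (rw ^ 2 + rv ^ 2 + 2 * rw * rv * Real.cos Θvw) +
          Real.sqrt (ru ^ 2 + rv ^ 2 + 2 * ru * rv * Real.cos Θuv) := h
      _ = Real.sqrt (ru ^ 2 + rv ^ 2 + 2 * ru * rv * Real.cos Θuv) +
          Real.sqrt (rv ^ 2 + rw ^ 2 + 2 * rv * rw * Real.cos Θvw) := by
          rw [show rw ^ 2 + rv ^ 2 + 2 * rw * rv * Real.cos Θvw
              = rv ^ 2 + rw ^ 2 + 2 * rv * rw * Real.cos Θvw by ring]
          ring
end

section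
/- Let α_u denote the interior angle at the vertex corresponding to u in the Euclidean triangle with side lengths l_uv, l_vw, l_uw defined from radii r_u, r_v, r_w > 0 and overlap angles in [0, π/2] via l_uv = sqrt(r_u² + r_v² + 2 r_u r_v cos Θ_uv). Then, keeping r_v, r_w fixed, α_u is a strictly decreasing function of r_u. -/
open Real Set

/-- Angle at the vertex `u` of the triangle of centers, by the law of cosines. -/
noncomputable def alphaU (ru rv rw Θuv Θvw Θuw : ℝ) : ℝ :=
  Real.arccos (((elen ru rv Θuv) ^ 2 + (elen ru rw Θuw) ^ 2 - (elen rv rw Θvw) ^ 2) /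
    (2 * elen ru rv Θuv * elen ru rw Θuw))


lemma key_ineq (x rv rw p q D : ℝ) (hx : 0 < x) (hrv : 0 < rv) (hrw : 0 < rw)
    (hp : 0 ≤ p) (hp' : p ≤ rv) (hq : 0 ≤ q) (hq' : q ≤ rw)
    (hD : rv^2 + rw^2 ≤ D) :
    0 < (x + p) * (x^2 + rw^2 + 2*x*q) *
        ((x^2 + rv^2 + 2*x*p) + D - (x^2 + rw^2 + 2*x*q))
      + (x + q) * (x^2 + rv^2 + 2*x*p) *
        ((x^2 + rw^2 + 2*x*q) + D - (x^2 + rv^2 + 2*x*p)) := by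
  have hx3 : (0:ℝ) ≤ x^3 := by positivity
  nlinarith [mul_pos (mul_pos hx (mul_pos hrv hrv)) (mul_pos hrw hrw),
    mul_nonneg hx3 (mul_nonneg (sub_nonneg.2 hp') (by linarith : (0:ℝ) ≤ rv + p)),
    mul_nonneg hx3 (mul_nonneg (sub_nonneg.2 hq') (by linarith : (0:ℝ) ≤ rw + q)),
    mul_nonneg hx3 (mul_nonneg hp hq),
    mul_nonneg (mul_nonneg hrv.le hrv.le) (mul_nonneg hq (by positivity : (0:ℝ) ≤ 3*x^2 + x*p + x*q)),
    mul_nonneg (mul_nonneg hrw.le hrw.le) (mul_nonneg hp (by positivity : (0:ℝ) ≤ 3*x^2 + x*p + x*q)),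
    mul_nonneg (mul_nonneg (mul_nonneg hrv.le hrv.le) hp) (mul_nonneg hrw.le hrw.le),
    mul_nonneg (mul_nonneg (mul_nonneg hrw.le hrw.le) hq) (mul_nonneg hrv.le hrv.le),
    mul_nonneg (sub_nonneg.2 hD)
      (by positivity : (0:ℝ) ≤ (x+p)*(x^2 + rw^2 + 2*x*q) + (x+q)*(x^2 + rv^2 + 2*x*p))]

lemma poly_hasDerivAt (r p x : ℝ) :
    HasDerivAt (fun t : ℝ => t^2 + r^2 + 2*t*p) (2*x + 2*p) x := by
  have h0 : (fun t : ℝ => t^2 + r^2 + 2*t*p) = fun t : ℝ => (t^2 + r^2) + (2*p)*t :=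
    funext fun t => by ring
  have h : HasDerivAt (fun t : ℝ => (t^2 + r^2) + (2*p)*t) ((2:ℕ)*x^(2-1) + (2*p)*1) x :=
    ((hasDerivAt_pow 2 x).add_const (r^2)).add ((hasDerivAt_id' x).const_mul (2*p))
  rw [h0]
  convert h using 1
  push_cast
  ring

lemma f_mono (rv rw p q D : ℝ) (hrv : 0 < rv) (hrw : 0 < rw)
    (hp : 0 ≤ p) (hp' : p ≤ rv) (hq : 0 ≤ q) (hq' : q ≤ rw)
    (hD : rv^2 + rw^2 ≤ D) :
    StrictMonoOn (fun t : ℝ =>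
      ((t^2 + rv^2 + 2*t*p) + (t^2 + rw^2 + 2*t*q) - D) /
        (2 * Real.sqrt (t^2 + rv^2 + 2*t*p) * Real.sqrt (t^2 + rw^2 + 2*t*q)))
      (Set.Ioi 0) := by
  have hder : ∀ x ∈ Set.Ioi (0:ℝ),
      HasDerivAt (fun t : ℝ =>
        ((t^2 + rv^2 + 2*t*p) + (t^2 + rw^2 + 2*t*q) - D) /
          (2 * Real.sqrt (t^2 + rv^2 + 2*t*p) * Real.sqrt (t^2 + rw^2 + 2*t*q)))
        ((((2*x + 2*p) + (2*x + 2*q)) * (2 * Real.sqrt (x^2 + rv^2 + 2*x*p) * Real.sqrt (x^2 + rw^2 + 2*x*q))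
          - ((x^2 + rv^2 + 2*x*p) + (x^2 + rw^2 + 2*x*q) - D) *
            (2 * ((2*x + 2*p) / (2 * Real.sqrt (x^2 + rv^2 + 2*x*p))) * Real.sqrt (x^2 + rw^2 + 2*x*q)
              + 2 * Real.sqrt (x^2 + rv^2 + 2*x*p) * ((2*x + 2*q) / (2 * Real.sqrt (x^2 + rw^2 + 2*x*q)))))
          / (2 * Real.sqrt (x^2 + rv^2 + 2*x*p) * Real.sqrt (x^2 + rw^2 + 2*x*q))^2) x := by
    intro x hx
    have hx0 : (0:ℝ) < x := hx
    have hA0 : (0:ℝ) < x^2 + rv^2 + 2*x*p := by positivity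
    have hB0 : (0:ℝ) < x^2 + rw^2 + 2*x*q := by positivity
    have hsA : HasDerivAt (fun t : ℝ => Real.sqrt (t^2 + rv^2 + 2*t*p))
        ((2*x + 2*p) / (2 * Real.sqrt (x^2 + rv^2 + 2*x*p))) x :=
      (poly_hasDerivAt rv p x).sqrt hA0.ne'
    have hsB : HasDerivAt (fun t : ℝ => Real.sqrt (t^2 + rw^2 + 2*t*q))
        ((2*x + 2*q) / (2 * Real.sqrt (x^2 + rw^2 + 2*x*q))) x :=
      (poly_hasDerivAt rw q x).sqrt hB0.ne'
    have hnum : HasDerivAt (fun t : ℝ => (t^2 + rv^2 + 2*t*p) + (t^2 + rw^2 + 2*t*q) - D)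
        ((2*x + 2*p) + (2*x + 2*q)) x :=
      ((poly_hasDerivAt rv p x).add (poly_hasDerivAt rw q x)).sub_const D
    have hden : HasDerivAt (fun t : ℝ => 2 * Real.sqrt (t^2 + rv^2 + 2*t*p) * Real.sqrt (t^2 + rw^2 + 2*t*q))
        (2 * ((2*x + 2*p) / (2 * Real.sqrt (x^2 + rv^2 + 2*x*p))) * Real.sqrt (x^2 + rw^2 + 2*x*q)
          + 2 * Real.sqrt (x^2 + rv^2 + 2*x*p) * ((2*x + 2*q) / (2 * Real.sqrt (x^2 + rw^2 + 2*x*q)))) x :=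
      (hsA.const_mul 2).mul hsB
    have hdenne : 2 * Real.sqrt (x^2 + rv^2 + 2*x*p) * Real.sqrt (x^2 + rw^2 + 2*x*q) ≠ 0 := by
      have := Real.sqrt_pos.2 hA0
      have := Real.sqrt_pos.2 hB0
      positivity
    exact hnum.div hden hdenne
  apply strictMonoOn_of_deriv_pos (convex_Ioi 0)
  · exact fun x hx => ((hder x hx).continuousAt).continuousWithinAt
  · intro x hx
    rw [interior_Ioi] at hx
    rw [(hder x hx).deriv]
    have hx0 : (0:ℝ) < x := hx
    have hA0 : (0:ℝ) < x^2 + rv^2 + 2*x*p := by positivity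
    have hB0 : (0:ℝ) < x^2 + rw^2 + 2*x*q := by positivity
    set a := Real.sqrt (x^2 + rv^2 + 2*x*p) with ha
    set b := Real.sqrt (x^2 + rw^2 + 2*x*q) with hb
    have hap : 0 < a := Real.sqrt_pos.2 hA0
    have hbp : 0 < b := Real.sqrt_pos.2 hB0
    have ha2 : a^2 = x^2 + rv^2 + 2*x*p := Real.sq_sqrt hA0.le
    have hb2 : b^2 = x^2 + rw^2 + 2*x*q := Real.sq_sqrt hB0.le
    have key := key_ineq x rv rw p q D hx0 hrv hrw hp hp' hq hq' hD
    rw [← ha2, ← hb2] at key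
    rw [← ha2, ← hb2]
    apply div_pos _ (by positivity)
    have hmul :
        ((((2*x + 2*p) + (2*x + 2*q)) * (2 * a * b)
          - (a^2 + b^2 - D) *
            (2 * ((2*x + 2*p) / (2 * a)) * b + 2 * a * ((2*x + 2*q) / (2 * b)))) ) * (a * b)
        = 2 * ((x + p) * (b^2) * ((a^2) + D - (b^2)) + (x + q) * (a^2) * ((b^2) + D - (a^2))) := by
      field_simp
      ring
    have h2 : 0 < ((((2*x + 2*p) + (2*x + 2*q)) * (2 * a * b)
          - (a^2 + b^2 - D) *
            (2 * ((2*x + 2*p) / (2 * a)) * b + 2 * a * ((2*x + 2*q) / (2 * b)))) ) * (a * b) := by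
      rw [hmul]
      linarith
    have hab : 0 < a * b := mul_pos hap hbp
    rcases mul_pos_iff.mp h2 with ⟨h, _⟩ | ⟨_, h⟩
    · linarith
    · linarith

lemma f_bounds (t rv rw p q D : ℝ) (ht : 0 < t) (hrv : 0 < rv) (hrw : 0 < rw)
    (hp : 0 ≤ p) (hp' : p ≤ rv) (hq : 0 ≤ q) (hq' : q ≤ rw)
    (hD1 : rv^2 + rw^2 ≤ D) (hD2 : D ≤ (rv + rw)^2) :
    ((t^2 + rv^2 + 2*t*p) + (t^2 + rw^2 + 2*t*q) - D) /
        (2 * Real.sqrt (t^2 + rv^2 + 2*t*p) * Real.sqrt (t^2 + rw^2 + 2*t*q)) ∈ Set.Icc (-1:ℝ) 1 := by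
  have hA0 : (0:ℝ) < t^2 + rv^2 + 2*t*p := by positivity
  have hB0 : (0:ℝ) < t^2 + rw^2 + 2*t*q := by positivity
  set a := Real.sqrt (t^2 + rv^2 + 2*t*p) with ha
  set b := Real.sqrt (t^2 + rw^2 + 2*t*q) with hb
  have hap : 0 < a := Real.sqrt_pos.2 hA0
  have hbp : 0 < b := Real.sqrt_pos.2 hB0
  have ha2 : a^2 = t^2 + rv^2 + 2*t*p := Real.sq_sqrt hA0.le
  have hb2 : b^2 = t^2 + rw^2 + 2*t*q := Real.sq_sqrt hB0.le
  have harv : rv ≤ a := Real.le_sqrt_of_sq_le (by nlinarith)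
  have hbrw : rw ≤ b := Real.le_sqrt_of_sq_le (by nlinarith)
  have hatp : t + p ≤ a := Real.le_sqrt_of_sq_le (by nlinarith)
  have hbtq : t + q ≤ b := Real.le_sqrt_of_sq_le (by nlinarith)
  have hden : (0:ℝ) < 2 * a * b := by positivity
  constructor
  · rw [le_div_iff₀ hden]
    nlinarith [mul_le_mul harv hbrw hrw.le (by linarith : (0:ℝ) ≤ a)]
  · rw [div_le_one hden]
    nlinarith [mul_le_mul hatp hbtq (by linarith) (by linarith : (0:ℝ) ≤ a)]

theorem stmt_10 (rv rw Θuv Θvw Θuw : ℝ) (hrv : 0 < rv) (hrw : 0 < rw)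
    (huv : Θuv ∈ Set.Icc 0 (Real.pi / 2)) (hvw : Θvw ∈ Set.Icc 0 (Real.pi / 2))
    (huw : Θuw ∈ Set.Icc 0 (Real.pi / 2)) :
    StrictAntiOn (fun ru => alphaU ru rv rw Θuv Θvw Θuw) (Set.Ioi 0) := by
  have hpi := Real.pi_pos
  have hc1 : 0 ≤ Real.cos Θuv := Real.cos_nonneg_of_mem_Icc ⟨by linarith [huv.1], huv.2⟩
  have hc2 : 0 ≤ Real.cos Θuw := Real.cos_nonneg_of_mem_Icc ⟨by linarith [huw.1], huw.2⟩
  have hc3 : 0 ≤ Real.cos Θvw := Real.cos_nonneg_of_mem_Icc ⟨by linarith [hvw.1], hvw.2⟩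
  have hc1' : Real.cos Θuv ≤ 1 := Real.cos_le_one _
  have hc2' : Real.cos Θuw ≤ 1 := Real.cos_le_one _
  have hc3' : Real.cos Θvw ≤ 1 := Real.cos_le_one _
  set p := rv * Real.cos Θuv with hpdef
  set q := rw * Real.cos Θuw with hqdef
  set D := rv^2 + rw^2 + 2 * rv * rw * Real.cos Θvw with hDdef
  have hp : 0 ≤ p := by positivity
  have hp' : p ≤ rv := by nlinarith
  have hq : 0 ≤ q := by positivity
  have hq' : q ≤ rw := by nlinarith
  have hD1 : rv^2 + rw^2 ≤ D := by
    rw [hDdef]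
    nlinarith [mul_nonneg (mul_nonneg hrv.le hrw.le) hc3]
  have hD2 : D ≤ (rv + rw)^2 := by
    rw [hDdef]
    nlinarith [mul_nonneg (mul_nonneg hrv.le hrw.le) (sub_nonneg.2 hc3')]
  have halpha : ∀ t : ℝ, 0 < t → alphaU t rv rw Θuv Θvw Θuw =
      Real.arccos (((t^2 + rv^2 + 2*t*p) + (t^2 + rw^2 + 2*t*q) - D) /
        (2 * Real.sqrt (t^2 + rv^2 + 2*t*p) * Real.sqrt (t^2 + rw^2 + 2*t*q))) := by
    intro t ht
    have hA0 : (0:ℝ) ≤ t^2 + rv^2 + 2*t*p := by positivity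
    have hB0 : (0:ℝ) ≤ t^2 + rw^2 + 2*t*q := by positivity
    have hD0 : (0:ℝ) ≤ rv^2 + rw^2 + 2*rv*rw*Real.cos Θvw := by positivity
    have e1 : elen t rv Θuv = Real.sqrt (t^2 + rv^2 + 2*t*p) := by
      rw [elen]; congr 1; rw [hpdef]; ring
    have e2 : elen t rw Θuw = Real.sqrt (t^2 + rw^2 + 2*t*q) := by
      rw [elen]; congr 1; rw [hqdef]; ring
    have e3 : (elen rv rw Θvw)^2 = D := by
      rw [elen, Real.sq_sqrt hD0, hDdef]
    rw [alphaU, e1, e2, e3, Real.sq_sqrt hA0, Real.sq_sqrt hB0]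
  intro x hx y hy hxy
  have hx0 : (0:ℝ) < x := hx
  have hy0 : (0:ℝ) < y := hy
  simp only []
  rw [halpha x hx0, halpha y hy0]
  have hmono := f_mono rv rw p q D hrv hrw hp hp' hq hq' hD1 hx hy hxy
  exact Real.strictAntiOn_arccos
    (f_bounds x rv rw p q D hx0 hrv hrw hp hp' hq hq' hD1 hD2)
    (f_bounds y rv rw p q D hy0 hrv hrw hp hp' hq hq' hD1 hD2)
    hmono
end

section
/- In the setting of the previous monotonicity: with nonobtuse overlap angles and the triangle of side lengths l_uv, l_vw, l_uw, the angle α_u at vertex u tends to 0 as r_u → ∞ (with r_v, r_w fixed). -/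
open Filter Real

lemma aux_expr_tendsto (r c : ℝ) :
    Tendsto (fun ru : ℝ => (ru ^ 2 + r ^ 2 + 2 * ru * r * c) / ru ^ 2) atTop (nhds 1) := by
  have hsq : Tendsto (fun ru : ℝ => ru ^ 2) atTop atTop :=
    tendsto_pow_atTop (by norm_num)
  have h1 : Tendsto (fun ru : ℝ => r ^ 2 / ru ^ 2) atTop (nhds 0) :=
    Tendsto.div_atTop tendsto_const_nhds hsq
  have h2 : Tendsto (fun ru : ℝ => (2 * r * c) / ru) atTop (nhds 0) :=
    Tendsto.div_atTop tendsto_const_nhds tendsto_id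
  have h3 : Tendsto (fun ru : ℝ => 1 + r ^ 2 / ru ^ 2 + (2 * r * c) / ru) atTop
      (nhds (1 + 0 + 0)) := (tendsto_const_nhds.add h1).add h2
  rw [show (1:ℝ) + 0 + 0 = 1 by norm_num] at h3
  refine h3.congr' ?_
  filter_upwards [eventually_gt_atTop (0:ℝ)] with ru hru
  field_simp

lemma aux_elen_ratio (r Θ : ℝ) (hr : 0 ≤ r) (hc : 0 ≤ Real.cos Θ) :
    Tendsto (fun ru : ℝ => elen ru r Θ / ru) atTop (nhds 1) := by
  have h := (Real.continuous_sqrt.tendsto 1).comp (aux_expr_tendsto r (Real.cos Θ))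
  rw [Real.sqrt_one] at h
  refine h.congr' ?_
  filter_upwards [eventually_gt_atTop (0:ℝ)] with ru hru
  have hnn : (0:ℝ) ≤ ru ^ 2 + r ^ 2 + 2 * ru * r * Real.cos Θ := by positivity
  simp only [Function.comp_apply, elen]
  rw [Real.sqrt_div hnn, Real.sqrt_sq hru.le]

theorem stmt_11 (rv rw Θuv Θvw Θuw : ℝ) (hrv : 0 < rv) (hrw : 0 < rw)
    (huv : Θuv ∈ Set.Icc 0 (Real.pi / 2)) (hvw : Θvw ∈ Set.Icc 0 (Real.pi / 2))
    (huw : Θuw ∈ Set.Icc 0 (Real.pi / 2)) :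
    Filter.Tendsto (fun ru => alphaU ru rv rw Θuv Θvw Θuw) Filter.atTop (nhds 0) := by
  have hcuv : 0 ≤ Real.cos Θuv :=
    Real.cos_nonneg_of_mem_Icc ⟨by linarith [huv.1, Real.pi_pos], huv.2⟩
  have hcuw : 0 ≤ Real.cos Θuw :=
    Real.cos_nonneg_of_mem_Icc ⟨by linarith [huw.1, Real.pi_pos], huw.2⟩
  have hsq : Tendsto (fun ru : ℝ => ru ^ 2) atTop atTop :=
    tendsto_pow_atTop (by norm_num)
  -- numerator over ru^2 tends to 2
  have hNc : Tendsto (fun ru : ℝ => (elen rv rw Θvw) ^ 2 / ru ^ 2) atTop (nhds 0) :=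
    Tendsto.div_atTop tendsto_const_nhds hsq
  have hN : Tendsto (fun ru : ℝ =>
      ((elen ru rv Θuv) ^ 2 + (elen ru rw Θuw) ^ 2 - (elen rv rw Θvw) ^ 2) / ru ^ 2) atTop
      (nhds 2) := by
    have h := ((aux_expr_tendsto rv (Real.cos Θuv)).add
      (aux_expr_tendsto rw (Real.cos Θuw))).sub hNc
    rw [show (1:ℝ) + 1 - 0 = 2 by norm_num] at h
    refine h.congr' ?_
    filter_upwards [eventually_gt_atTop (0:ℝ)] with ru hru
    have h1 : (0:ℝ) ≤ ru ^ 2 + rv ^ 2 + 2 * ru * rv * Real.cos Θuv := by positivity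
    have h2 : (0:ℝ) ≤ ru ^ 2 + rw ^ 2 + 2 * ru * rw * Real.cos Θuw := by positivity
    simp only [elen, Real.sq_sqrt h1, Real.sq_sqrt h2]
    ring
  -- denominator over ru^2 tends to 2
  have hD : Tendsto (fun ru : ℝ =>
      2 * elen ru rv Θuv * elen ru rw Θuw / ru ^ 2) atTop (nhds 2) := by
    have h := (tendsto_const_nhds (x := (2:ℝ)) (f := atTop)).mul
      ((aux_elen_ratio rv Θuv hrv.le hcuv).mul (aux_elen_ratio rw Θuw hrw.le hcuw))
    rw [show (2:ℝ) * (1 * 1) = 2 by norm_num] at h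
    refine h.congr' ?_
    filter_upwards [eventually_ne_atTop (0:ℝ)] with ru hru
    field_simp
  -- ratio tends to 1
  have hR : Tendsto (fun ru : ℝ =>
      ((elen ru rv Θuv) ^ 2 + (elen ru rw Θuw) ^ 2 - (elen rv rw Θvw) ^ 2) /
        (2 * elen ru rv Θuv * elen ru rw Θuw)) atTop (nhds 1) := by
    have h := hN.div hD (by norm_num)
    rw [show (2:ℝ) / 2 = 1 by norm_num] at h
    refine h.congr' ?_
    filter_upwards [eventually_ne_atTop (0:ℝ)] with ru hru
    simp only [Pi.div_apply]
    rw [div_div_div_cancel_right₀ (pow_ne_zero 2 hru)]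
  have h := (Real.continuous_arccos.tendsto 1).comp hR
  rw [Real.arccos_one] at h
  exact h
end

section
/- Let f : ℝⁿ → ℝ be a C¹ function that attains its minimum only at x*, with ∇f(x*) = 0 and no other critical points, and suppose f is coercive. Then for any initial point x⁰ and any ε > 0 there exists a step size η > 0 and k ∈ ℕ such that the gradient descent iterates x^{(k+1)} = x^{(k)} − η ∇f(x^{(k)}) satisfy ‖x^{(k)} − x*‖ < ε, provided f additionally has Lipschitz continuous gradient on the sublevel set {f ≤ f(x⁰)}. -/
open InnerProductSpace Set Filter Topology

lemma grad_fderiv {n : ℕ} (f : EuclideanSpace ℝ (Fin n) → ℝ) (y v : EuclideanSpace ℝ (Fin n)) :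
    (fderiv ℝ f y) v = ⟪gradient f y, v⟫_ℝ := by
  have h : InnerProductSpace.toDual ℝ _ (gradient f y) = fderiv ℝ f y :=
    (InnerProductSpace.toDual ℝ _).apply_symm_apply _
  rw [← h, InnerProductSpace.toDual_apply_apply]

lemma descent {n : ℕ} (f : EuclideanSpace ℝ (Fin n) → ℝ) (hf : ContDiff ℝ 1 f)
    {c0 L : ℝ} (hL : 0 < L)
    (hlip : ∀ y z, f y ≤ c0 → f z ≤ c0 → ‖gradient f y - gradient f z‖ ≤ L * ‖y - z‖)
    {x : EuclideanSpace ℝ (Fin n)} (hx : f x ≤ c0) :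
    f (x - L⁻¹ • gradient f x) ≤ f x - L⁻¹ / 2 * ‖gradient f x‖ ^ 2 := by
  set η := L⁻¹ with hηdef
  have hη0 : 0 < η := inv_pos.mpr hL
  set g := gradient f x with hgdef
  by_cases hg0 : g = 0
  · simp [hg0]
  have hC : (0:ℝ) < ‖g‖ ^ 2 := pow_pos (norm_pos_iff.mpr hg0) 2
  set φ : ℝ → EuclideanSpace ℝ (Fin n) := fun t => x - (t * η) • g with hφdef
  have hφ0 : φ 0 = x := by simp [hφdef]
  have hφ1 : φ 1 = x - η • g := by simp [hφdef]
  have hdf : Differentiable ℝ f := hf.differentiable one_ne_zero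
  have hφd : ∀ t : ℝ, HasDerivAt φ (-(η • g)) t := by
    intro t
    have h1 : HasDerivAt (fun t : ℝ => t * η) η t := by
      simpa using (hasDerivAt_id t).mul_const η
    have h2 : HasDerivAt (fun t : ℝ => (t * η) • g) (η • g) t := h1.smul_const g
    simpa using h2.const_sub x
  have hh : ∀ t : ℝ, HasDerivAt (fun t => f (φ t)) (⟪gradient f (φ t), -(η • g)⟫_ℝ) t := by
    intro t
    have := (hdf (φ t)).hasFDerivAt.comp_hasDerivAt t (hφd t)
    rw [grad_fderiv] at this
    exact this
  have hcont : Continuous fun t => f (φ t) := by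
    exact hf.continuous.comp (by fun_prop)
  have hLη : L * η = 1 := mul_inv_cancel₀ hL.ne'
  have hbound : ∀ t : ℝ, 0 ≤ t → f (φ t) ≤ c0 →
      ⟪gradient f (φ t), -(η • g)⟫_ℝ ≤ -(η * ((1 - t) * ‖g‖ ^ 2)) := by
    intro t ht hfc
    have hdist : ‖φ t - x‖ = t * η * ‖g‖ := by
      have : φ t - x = -((t * η) • g) := by simp [hφdef]
      rw [this, norm_neg, norm_smul, Real.norm_eq_abs, abs_of_nonneg (by positivity)]
    have h1 : ‖gradient f (φ t) - g‖ ≤ L * (t * η * ‖g‖) := by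
      have := hlip (φ t) x hfc hx
      rwa [hdist] at this
    have h2 : ⟪gradient f (φ t), g⟫_ℝ = ⟪g, g⟫_ℝ + ⟪gradient f (φ t) - g, g⟫_ℝ := by
      rw [← inner_add_left]
      congr 1
      abel
    have h3 : |⟪gradient f (φ t) - g, g⟫_ℝ| ≤ ‖gradient f (φ t) - g‖ * ‖g‖ :=
      abs_real_inner_le_norm _ _
    have h4 : ⟪gradient f (φ t), g⟫_ℝ ≥ (1 - t) * ‖g‖ ^ 2 := by
      have hgg : ⟪g, g⟫_ℝ = ‖g‖ ^ 2 := real_inner_self_eq_norm_sq g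
      have h5 : ⟪gradient f (φ t) - g, g⟫_ℝ ≥ -(L * (t * η * ‖g‖) * ‖g‖) := by
        have := abs_le.mp h3
        nlinarith [this.1, mul_le_mul_of_nonneg_right h1 (norm_nonneg g)]
      have : L * (t * η * ‖g‖) * ‖g‖ = t * ‖g‖ ^ 2 := by
        have h6 : L * (t * η * ‖g‖) * ‖g‖ = L * η * (t * (‖g‖ * ‖g‖)) := by ring
        rw [h6, hLη, pow_two]; ring
      rw [this] at h5
      rw [h2, hgg]; linarith
    have : ⟪gradient f (φ t), -(η • g)⟫_ℝ = -(η * ⟪gradient f (φ t), g⟫_ℝ) := by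
      rw [inner_neg_right, real_inner_smul_right]
    rw [this]
    have := mul_le_mul_of_nonneg_left h4 hη0.le
    linarith
  -- Stage A : the whole segment stays in the sublevel set of f x
  have hstay : ∀ t ∈ Icc (0:ℝ) 1, f (φ t) ≤ f x := by
    set B := {t : ℝ | t ∈ Icc (0:ℝ) 1 ∧ ∀ s ∈ Icc (0:ℝ) t, f (φ s) ≤ f x} with hBdef
    have h0B : (0:ℝ) ∈ B := by
      refine ⟨⟨le_rfl, zero_le_one⟩, fun s hs => ?_⟩
      have : s = 0 := le_antisymm hs.2 hs.1
      simp [this, hφ0]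
    have hBbdd : BddAbove B := ⟨1, fun t ht => ht.1.2⟩
    have hBne : B.Nonempty := ⟨0, h0B⟩
    set T := sSup B with hTdef
    have hT0 : 0 ≤ T := le_csSup hBbdd h0B
    have hT1 : T ≤ 1 := csSup_le hBne fun t ht => ht.1.2
    have hmemIco : ∀ s, 0 ≤ s → s < T → f (φ s) ≤ f x := by
      intro s hs0 hsT
      obtain ⟨t, htB, hst⟩ := exists_lt_of_lt_csSup hBne hsT
      exact htB.2 s ⟨hs0, hst.le⟩
    have hTval : f (φ T) ≤ f x := by
      rcases eq_or_lt_of_le hT0 with h | h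
      · simp [← h, hφ0]
      · have htd : Tendsto (fun s => f (φ s)) (𝓝[<] T) (𝓝 (f (φ T))) :=
          (hcont.tendsto T).mono_left nhdsWithin_le_nhds
        refine le_of_tendsto htd ?_
        filter_upwards [Ioo_mem_nhdsLT_of_mem (show T ∈ Ioc (0:ℝ) T from ⟨h, le_rfl⟩)] with s hs
        exact hmemIco s hs.1.le hs.2
    have hTB : T ∈ B := by
      refine ⟨⟨hT0, hT1⟩, fun s hs => ?_⟩
      rcases lt_or_eq_of_le hs.2 with h | h
      · exact hmemIco s hs.1 h
      · rw [h]; exact hTval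
    have hTeq : T = 1 := by
      by_contra hne
      have hTlt : T < 1 := lt_of_le_of_ne hT1 hne
      have hpos : 0 < η * ((1 - T) * ‖g‖ ^ 2) := mul_pos hη0 (mul_pos (by linarith) hC)
      have hDneg : ⟪gradient f (φ T), -(η • g)⟫_ℝ < 0 :=
        lt_of_le_of_lt (hbound T hT0 (hTval.trans hx)) (by linarith)
      have hslope := hasDerivAt_iff_tendsto_slope.mp (hh T)
      have hsl2 : ∀ᶠ s in 𝓝[>] T, slope (fun t => f (φ t)) T s < 0 := by
        have hmono : 𝓝[>] T ≤ 𝓝[≠] T :=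
          nhdsWithin_mono T fun y hy => ne_of_gt hy
        exact (hslope.mono_left hmono).eventually_lt_const hDneg
      have hlt1 : ∀ᶠ s in 𝓝[>] T, s < 1 :=
        eventually_nhdsWithin_of_eventually_nhds (eventually_lt_nhds hTlt)
      obtain ⟨u, hu, husub⟩ := mem_nhdsGT_iff_exists_Ioo_subset.mp (hsl2.and hlt1)
      set t' := (T + min u 1) / 2 with ht'def
      have hTu : T < min u 1 := lt_min hu hTlt
      have hTt' : T < t' := by rw [ht'def]; linarith
      have ht'u : t' < u := by
        have : t' < min u 1 := by rw [ht'def]; linarith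
        exact lt_of_lt_of_le this (min_le_left _ _)
      have ht'1 : t' ≤ 1 := by
        have : t' < min u 1 := by rw [ht'def]; linarith
        exact (lt_of_lt_of_le this (min_le_right _ _)).le
      have ht'B : t' ∈ B := by
        refine ⟨⟨hT0.trans hTt'.le, ht'1⟩, fun s hs => ?_⟩
        rcases le_or_gt s T with h | h
        · exact hTB.2 s ⟨hs.1, h⟩
        · have hsIoo : s ∈ Ioo T u := ⟨h, lt_of_le_of_lt hs.2 ht'u⟩
          have := (husub hsIoo).1
          rw [slope_def_field] at this
          have hsT : 0 < s - T := by linarith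
          have : f (φ s) - f (φ T) < 0 := by
            by_contra hc
            push_neg at hc
            have := div_nonneg hc hsT.le
            linarith [this, (husub hsIoo).1, slope_def_field (fun t => f (φ t)) T s]
          linarith [hTval]
      have := le_csSup hBbdd ht'B
      linarith
    intro t ht
    exact (hTeq ▸ hTB).2 t ht
  -- Stage B : quantitative decrease via antitonicity of H
  have hpoly : ∀ t : ℝ, HasDerivAt (fun t : ℝ => η * ‖g‖ ^ 2 * (t - t ^ 2 / 2))
      (η * ‖g‖ ^ 2 * (1 - t)) t := by
    intro t
    have h1 : HasDerivAt (fun t : ℝ => t - t ^ 2 / 2) (1 - t) t := by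
      have := (hasDerivAt_id t).sub ((hasDerivAt_pow 2 t).div_const 2)
      refine this.congr_deriv ?_
      push_cast; ring
    exact h1.const_mul _
  set H : ℝ → ℝ := fun t => f (φ t) + η * ‖g‖ ^ 2 * (t - t ^ 2 / 2) with hHdef
  have hHd : ∀ t : ℝ, HasDerivAt H (⟪gradient f (φ t), -(η • g)⟫_ℝ + η * ‖g‖ ^ 2 * (1 - t)) t :=
    fun t => (hh t).add (hpoly t)
  have hanti : AntitoneOn H (Icc (0:ℝ) 1) := by
    apply antitoneOn_of_deriv_nonpos (convex_Icc 0 1)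
    · exact (hcont.add (by fun_prop)).continuousOn
    · intro t ht
      exact ((hHd t).differentiableAt).differentiableWithinAt
    · intro t ht
      rw [interior_Icc] at ht
      rw [(hHd t).deriv]
      have hb := hbound t ht.1.le ((hstay t ⟨ht.1.le, ht.2.le⟩).trans hx)
      linarith
  have := hanti (left_mem_Icc.mpr zero_le_one) (right_mem_Icc.mpr zero_le_one) zero_le_one
  rw [hHdef] at this
  simp only [hφ0, hφ1] at this
  norm_num at this
  linarith


/-- Gradient descent iterates with constant step size `η` starting at `x0`. -/
noncomputable def gdSeq {n : ℕ} (f : EuclideanSpace ℝ (Fin n) → ℝ) (η : ℝ)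
    (x0 : EuclideanSpace ℝ (Fin n)) : ℕ → EuclideanSpace ℝ (Fin n)
  | 0 => x0
  | k + 1 => gdSeq f η x0 k - η • gradient f (gdSeq f η x0 k)

theorem stmt_12 {n : ℕ} (f : EuclideanSpace ℝ (Fin n) → ℝ)
    (xstar x0 : EuclideanSpace ℝ (Fin n))
    (hf : ContDiff ℝ 1 f)
    (hmin : ∀ x, f xstar ≤ f x)
    (hgrad : gradient f xstar = 0)
    (hcrit : ∀ x, gradient f x = 0 → x = xstar)
    (hcoercive : Filter.Tendsto f (Filter.cocompact _) Filter.atTop)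
    (hlip : ∃ K : NNReal, LipschitzOnWith K (gradient f) {x | f x ≤ f x0})
    (ε : ℝ) (hε : 0 < ε) :
    ∃ η > 0, ∃ k : ℕ, ‖gdSeq f η x0 k - xstar‖ < ε := by
  obtain ⟨K, hK⟩ := hlip
  set L : ℝ := (K : ℝ) + 1 with hLdef
  have hL : 0 < L := by positivity
  set η := L⁻¹ with hηdef
  have hη0 : 0 < η := inv_pos.mpr hL
  have hlip' : ∀ y z, f y ≤ f x0 → f z ≤ f x0 →
      ‖gradient f y - gradient f z‖ ≤ L * ‖y - z‖ := by
    intro y z hy hz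
    have h1 := hK.dist_le_mul y hy z hz
    rw [dist_eq_norm, dist_eq_norm] at h1
    have h2 : (K : ℝ) * ‖y - z‖ ≤ L * ‖y - z‖ :=
      mul_le_mul_of_nonneg_right (by simp [hLdef]) (norm_nonneg _)
    linarith
  set x : ℕ → EuclideanSpace ℝ (Fin n) := gdSeq f η x0 with hxdef
  have hx0 : x 0 = x0 := rfl
  have hxsucc : ∀ k, x (k + 1) = x k - η • gradient f (x k) := fun k => rfl
  have hlevel : ∀ k, f (x k) ≤ f x0 := by
    intro k
    induction k with
    | zero => exact le_rfl
    | succ k ih =>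
      have := descent f hf hL hlip' ih
      rw [hxsucc k]
      have hnn : 0 ≤ η / 2 * ‖gradient f (x k)‖ ^ 2 := by positivity
      calc f (x k - η • gradient f (x k)) ≤ f (x k) - L⁻¹ / 2 * ‖gradient f (x k)‖ ^ 2 := this
        _ ≤ f x0 := by rw [← hηdef]; linarith
  have hdec : ∀ k, f (x (k + 1)) ≤ f (x k) - η / 2 * ‖gradient f (x k)‖ ^ 2 := by
    intro k
    rw [hxsucc k, hηdef]
    exact descent f hf hL hlip' (hlevel k)
  refine ⟨η, hη0, ?_⟩
  by_contra hcon
  push_neg at hcon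
  -- the sublevel set is compact
  have hScompact : IsCompact {y | f y ≤ f x0} := by
    have h1 : ∀ᶠ y in Filter.cocompact _, f x0 + 1 ≤ f y :=
      hcoercive.eventually (Filter.eventually_ge_atTop _)
    rw [Filter.hasBasis_cocompact.eventually_iff] at h1
    obtain ⟨C, hCc, hC⟩ := h1
    refine hCc.of_isClosed_subset (isClosed_le hf.continuous continuous_const) ?_
    intro y hy
    by_contra h
    have := hC (Set.mem_compl h)
    simp only [Set.mem_setOf_eq] at hy
    linarith
  have hgc : Continuous (gradient f) :=
    (InnerProductSpace.toDual ℝ _).symm.continuous.comp (hf.continuous_fderiv one_ne_zero)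
  set C' := {y | f y ≤ f x0} ∩ {y | ε ≤ ‖y - xstar‖} with hC'def
  have hC'compact : IsCompact C' :=
    hScompact.inter_right (isClosed_le continuous_const (by fun_prop))
  have hC'ne : C'.Nonempty := ⟨x0, Set.mem_setOf_eq ▸ le_rfl, by exact hcon 0⟩
  obtain ⟨y0, hy0, hmin'⟩ :=
    hC'compact.exists_isMinOn hC'ne ((continuous_norm.comp hgc).continuousOn)
  set δ := ‖gradient f y0‖ with hδdef
  have hδ0 : 0 < δ := by
    rcases eq_or_lt_of_le (norm_nonneg (gradient f y0)) with h | h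
    · exfalso
      have hz : gradient f y0 = 0 := norm_eq_zero.mp h.symm
      have := hcrit y0 hz
      have h2 := hy0.2
      rw [this] at h2
      simp only [Set.mem_setOf_eq, sub_self, norm_zero] at h2
      linarith
    · exact h
  have hδk : ∀ k, δ ≤ ‖gradient f (x k)‖ := fun k =>
    hmin' ⟨hlevel k, hcon k⟩
  have hlin : ∀ k : ℕ, f (x k) ≤ f x0 - k * (η / 2 * δ ^ 2) := by
    intro k
    induction k with
    | zero => simpa using hlevel 0
    | succ k ih =>
      have h1 := hdec k
      have h2 : δ ^ 2 ≤ ‖gradient f (x k)‖ ^ 2 :=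
        pow_le_pow_left₀ hδ0.le (hδk k) 2
      have h3 : η / 2 * δ ^ 2 ≤ η / 2 * ‖gradient f (x k)‖ ^ 2 :=
        mul_le_mul_of_nonneg_left h2 (by positivity)
      push_cast
      push_cast at ih
      linarith
  obtain ⟨k, hk⟩ := exists_nat_gt ((f x0 - f xstar) / (η / 2 * δ ^ 2))
  have hc : 0 < η / 2 * δ ^ 2 := by positivity
  rw [div_lt_iff₀ hc] at hk
  have h1 := hlin k
  have h2 := hmin (x k)
  linarith
end

section
/- Let A_uvw be the area of the Euclidean triangle with side lengths l_uv, l_vw, l_uw arising from radii r_u, r_v, r_w > 0 and overlap angles in [0, π/2]. Then by Heron's formula 16 A_uvw² = 2 l_uv² l_vw² + 2 l_vw² l_uw² + 2 l_uw² l_uv² − l_uv⁴ − l_vw⁴ − l_uw⁴, and this quantity is strictly positive. -/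
lemma elen_lemmas (ru rv Θ : ℝ) (hru : 0 < ru) (hrv : 0 < rv)
    (h : Θ ∈ Set.Icc 0 (Real.pi / 2)) :
    ru < elen ru rv Θ ∧ rv < elen ru rv Θ ∧ elen ru rv Θ ≤ ru + rv := by
  have hc0 : 0 ≤ Real.cos Θ := Real.cos_nonneg_of_mem_Icc
    ⟨le_trans (by linarith [Real.pi_pos]) h.1, h.2⟩
  have hc1 : Real.cos Θ ≤ 1 := Real.cos_le_one Θ
  have hm : 0 ≤ 2 * ru * rv * Real.cos Θ := by positivity
  refine ⟨?_, ?_, ?_⟩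
  · exact (Real.lt_sqrt hru.le).mpr (by nlinarith)
  · exact (Real.lt_sqrt hrv.le).mpr (by nlinarith)
  · have : elen ru rv Θ ≤ Real.sqrt ((ru + rv) ^ 2) :=
      Real.sqrt_le_sqrt (by nlinarith [mul_nonneg (mul_nonneg (by linarith : (0:ℝ) ≤ 2*ru) hrv.le) (sub_nonneg.mpr hc1)])
    rwa [Real.sqrt_sq (by positivity)] at this

theorem stmt_16 (ru rv rw Θuv Θvw Θuw : ℝ)
    (hru : 0 < ru) (hrv : 0 < rv) (hrw : 0 < rw)
    (huv : Θuv ∈ Set.Icc 0 (Real.pi / 2)) (hvw : Θvw ∈ Set.Icc 0 (Real.pi / 2))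
    (huw : Θuw ∈ Set.Icc 0 (Real.pi / 2)) :
    let Q : ℝ := 2 * (elen ru rv Θuv) ^ 2 * (elen rv rw Θvw) ^ 2
        + 2 * (elen rv rw Θvw) ^ 2 * (elen ru rw Θuw) ^ 2
        + 2 * (elen ru rw Θuw) ^ 2 * (elen ru rv Θuv) ^ 2
        - (elen ru rv Θuv) ^ 4 - (elen rv rw Θvw) ^ 4 - (elen ru rw Θuw) ^ 4
    let A : ℝ := Real.sqrt Q / 4
    16 * A ^ 2 = Q ∧ 0 < Q := by
  intro Q A
  obtain ⟨h1u, h1v, h1s⟩ := elen_lemmas ru rv Θuv hru hrv huv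
  obtain ⟨h2v, h2w, h2s⟩ := elen_lemmas rv rw Θvw hrv hrw hvw
  obtain ⟨h3u, h3w, h3s⟩ := elen_lemmas ru rw Θuw hru hrw huw
  set a := elen ru rv Θuv
  set b := elen rv rw Θvw
  set c := elen ru rw Θuw
  have t1 : c < a + b := by linarith
  have t2 : a < b + c := by linarith
  have t3 : b < a + c := by linarith
  have hQ : Q = (a + b + c) * (-a + b + c) * (a - b + c) * (a + b - c) := by
    show (2*a^2*b^2 + 2*b^2*c^2 + 2*c^2*a^2 - a^4 - b^4 - c^4) = _
    ring
  have hQpos : 0 < Q := by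
    have ha : 0 < a := lt_trans hru h1u
    rw [hQ]
    apply mul_pos (mul_pos (mul_pos (by linarith) (by linarith)) (by linarith)) (by linarith)
  exact ⟨by show 16 * (Real.sqrt Q / 4) ^ 2 = Q
            rw [div_pow, Real.sq_sqrt hQpos.le]; ring, hQpos⟩
end
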